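/- Fix a real n > 0 and for each x > 0 let s₊(x) denote the unique solution s > x of n = 2s·(arctan(s) − arctan(x)). Then s₊(x) = (1 + n/2)·x + O(1/x) as x → ∞; that is, x·(s₊(x) − (1 + n/2)x) remains bounded as x → ∞. -/

import Mathlib

open Real Filter Asymptotics

/-- Fix `n > 0` and for each `x > 0` let `s x > x` solve `n = 2s(arctan s - arctan x)`.
Then `s x = (1 + n/2) x + O(1/x)` as `x → ∞`, i.e. `x (s x - (1 + n/2) x)` stays
bounded as `x → ∞`. -/
theorem saddle_point_positive_branch_asymptotics (n : ℝ) (hn : 0 < n)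
    (s : ℝ → ℝ)
    (hs : ∀ x : ℝ, 0 < x →
      x < s x ∧ n = 2 * s x * (arctan (s x) - arctan x)) :
    (fun x : ℝ => s x - (1 + n / 2) * x) =O[atTop] fun x : ℝ => x⁻¹ := by
  have key : ∀ x : ℝ, 0 < x → |s x - (1 + n / 2) * x| ≤ n / 2 * x⁻¹ := by
    intro x hx
    obtain ⟨hxs, heq⟩ := hs x hx
    set S := s x with hSdef
    have hS0 : 0 < S := hx.trans hxs
    have hinv : S⁻¹ < x⁻¹ := by
      exact inv_strictAnti₀ hx hxs
    obtain ⟨c, hc, hceq⟩ := exists_hasDerivAt_eq_slope Real.arctan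
      (fun t => 1 / (1 + t ^ 2)) hinv
      (Real.continuous_arctan.continuousOn)
      (fun t _ => Real.hasDerivAt_arctan t)
    have harc : arctan S - arctan x = arctan x⁻¹ - arctan S⁻¹ := by
      rw [Real.arctan_inv_of_pos hx, Real.arctan_inv_of_pos hS0]; ring
    have hc1 : 0 < c := lt_trans (inv_pos.2 hS0) hc.1
    have hc2 : c < x⁻¹ := hc.2
    have hcpos : (0:ℝ) < 1 + c ^ 2 := by positivity
    have hΔ : x⁻¹ - S⁻¹ ≠ 0 := ne_of_gt (sub_pos.2 hinv)
    have hxne : x ≠ 0 := ne_of_gt hx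
    have hSne : S ≠ 0 := ne_of_gt hS0
    have harc2 : arctan x⁻¹ - arctan S⁻¹ = (x⁻¹ - S⁻¹) / (1 + c ^ 2) := by
      rw [eq_div_iff (ne_of_gt hcpos)]
      have h := hceq
      rw [div_eq_div_iff (ne_of_gt hcpos) hΔ] at h
      linarith [h]
    rw [harc, harc2] at heq
    have h1 : n * (1 + c ^ 2) = 2 * S * (x⁻¹ - S⁻¹) := by
      rw [heq, mul_assoc, div_mul_cancel₀ _ (ne_of_gt hcpos)]
    have key0 : n * ((1 + c ^ 2) * (x * S)) = 2 * S * (S - x) := by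
      calc n * ((1 + c ^ 2) * (x * S)) = n * (1 + c ^ 2) * (x * S) := by ring
        _ = 2 * S * ((S - x) / (x * S)) * (x * S) := by
            rw [h1, inv_sub_inv hxne hSne]
        _ = 2 * S * (S - x) := by
            rw [mul_assoc, div_mul_cancel₀ _ (mul_ne_zero hxne hSne)]
    have hEq : S - (1 + n / 2) * x = n * x * c ^ 2 / 2 := by
      have h3 : S * (S - (1 + n / 2) * x) = S * (n * x * c ^ 2 / 2) := by
        linear_combination -key0 / 2
      exact mul_left_cancel₀ hSne h3
    rw [hEq, abs_of_nonneg (by positivity)]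
    have hcsq : c ^ 2 ≤ x⁻¹ ^ 2 := by nlinarith
    calc n * x * c ^ 2 / 2 ≤ n * x * x⁻¹ ^ 2 / 2 := by nlinarith
      _ = n / 2 * x⁻¹ := by field_simp
  rw [isBigO_iff]
  refine ⟨n / 2, ?_⟩
  filter_upwards [eventually_gt_atTop (0:ℝ)] with x hx
  rw [Real.norm_eq_abs, Real.norm_eq_abs, abs_of_pos (inv_pos.2 hx)]
  exact key x hx
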